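/- Any standard interference mapping T : ℝ₊^K → ℝ₊₊^K is nonexpansive with respect to the Thompson metric on the positive cone: for all p, q ∈ ℝ₊₊^K, d_T(T(p), T(q)) ≤ d_T(p, q), where d_T(x, y) = log max_k max{x_k/y_k, y_k/x_k}. -/
import Mathlib


/-- `f` is a standard interference function on `ℝ₊^K`: strictly positive on the
nonnegative orthant, monotone w.r.t. the coordinatewise order, and scalable. -/
def IsStdIF {K : ℕ} (f : (Fin K → ℝ) → ℝ) : Prop :=
  (∀ p : Fin K → ℝ, (∀ i, 0 ≤ p i) → 0 < f p) ∧
  (∀ p q : Fin K → ℝ, (∀ i, 0 ≤ q i) → (∀ i, q i ≤ p i) → f q ≤ f p) ∧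
  (∀ p : Fin K → ℝ, (∀ i, 0 ≤ p i) → ∀ α : ℝ, 1 < α → f (α • p) < α * f p)

/-- Thompson metric on the strictly positive cone of ℝ^K (K > 0). -/
noncomputable def thompsonDist {K : ℕ} (hK : 0 < K) (x y : Fin K → ℝ) : ℝ :=
  Real.log (Finset.univ.sup' (Finset.univ_nonempty_iff.mpr
    (Fin.pos_iff_nonempty.mp hK)) fun k => max (x k / y k) (y k / x k))

theorem stmt9 {K : ℕ} (hK : 0 < K) (T : (Fin K → ℝ) → (Fin K → ℝ))
    (hT : ∀ k : Fin K, IsStdIF (fun p => T p k))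
    (p q : Fin K → ℝ) (hp : ∀ i, 0 < p i) (hq : ∀ i, 0 < q i) :
    thompsonDist hK (T p) (T q) ≤ thompsonDist hK p q := by
  have hne : (Finset.univ : Finset (Fin K)).Nonempty :=
    Finset.univ_nonempty_iff.mpr (Fin.pos_iff_nonempty.mp hK)
  set S := Finset.univ.sup' hne (fun k => max (p k / q k) (q k / p k)) with hSdef
  have hTp : ∀ k, 0 < T p k := fun k => (hT k).1 p (fun i => (hp i).le)
  have hTq : ∀ k, 0 < T q k := fun k => (hT k).1 q (fun i => (hq i).le)
  -- 1 ≤ S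
  obtain ⟨k0, _⟩ := hne
  have hS1 : 1 ≤ S := by
    have h1 : (1:ℝ) ≤ max (p k0 / q k0) (q k0 / p k0) := by
      rcases le_total (p k0) (q k0) with h | h
      · exact le_max_of_le_right ((one_le_div (hp k0)).mpr h)
      · exact le_max_of_le_left ((one_le_div (hq k0)).mpr h)
    exact h1.trans (Finset.le_sup' (f := fun k => max (p k / q k) (q k / p k)) (Finset.mem_univ k0))
  have hpSq : ∀ i, p i ≤ S * q i := fun i => by
    have := (le_max_left (p i / q i) (q i / p i)).trans
      (Finset.le_sup' (f := fun k => max (p k / q k) (q k / p k)) (Finset.mem_univ i))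
    calc p i = p i / q i * q i := by exact (div_mul_cancel₀ _ (hq i).ne').symm
    _ ≤ S * q i := by exact mul_le_mul_of_nonneg_right this (hq i).le
  have hqSp : ∀ i, q i ≤ S * p i := fun i => by
    have := (le_max_right (p i / q i) (q i / p i)).trans
      (Finset.le_sup' (f := fun k => max (p k / q k) (q k / p k)) (Finset.mem_univ i))
    calc q i = q i / p i * p i := by exact (div_mul_cancel₀ _ (hp i).ne').symm
    _ ≤ S * p i := by exact mul_le_mul_of_nonneg_right this (hp i).le
  rcases eq_or_lt_of_le hS1 with hS | hS
  · -- S = 1, so p = q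
    have hpq : p = q := by
      funext i
      have h1 := hpSq i; have h2 := hqSp i
      rw [← hS, one_mul] at h1 h2
      exact le_antisymm h1 h2
    rw [hpq]
    unfold thompsonDist
    apply Real.log_le_log
    · apply lt_of_lt_of_le one_pos
      have h1 : (1:ℝ) ≤ max (T q k0 / T q k0) (T q k0 / T q k0) := by
        simp [div_self (hTq k0).ne']
      exact h1.trans
        (Finset.le_sup' (f := fun k => max (T q k / T q k) (T q k / T q k)) (Finset.mem_univ k0))
    · apply Finset.sup'_le
      intro k _
      apply Finset.le_sup' (f := fun k => max (q k / q k) (q k / q k)) (Finset.mem_univ k) |>.trans'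
      simp [div_self (hTq k).ne', div_self (hq k).ne']
  · -- 1 < S
    have hbound : ∀ k, max (T p k / T q k) (T q k / T p k) ≤ S := by
      intro k
      have h1 : T p k ≤ S * T q k := by
        have hmono := (hT k).2.1 (S • q) p (fun i => (hp i).le)
          (fun i => by simpa using hpSq i)
        have hscale := (hT k).2.2 q (fun i => (hq i).le) S hS
        exact hmono.trans hscale.le
      have h2 : T q k ≤ S * T p k := by
        have hmono := (hT k).2.1 (S • p) q (fun i => (hq i).le)
          (fun i => by simpa using hqSp i)
        have hscale := (hT k).2.2 p (fun i => (hp i).le) S hS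
        exact hmono.trans hscale.le
      apply max_le
      · rw [div_le_iff₀ (hTq k)]; linarith [h1]
      · rw [div_le_iff₀ (hTp k)]; linarith [h2]
    unfold thompsonDist
    apply Real.log_le_log
    · apply lt_of_lt_of_le one_pos
      have h1 : (1:ℝ) ≤ max (T p k0 / T q k0) (T q k0 / T p k0) := by
        rcases le_total (T p k0) (T q k0) with h | h
        · exact le_max_of_le_right ((one_le_div (hTp k0)).mpr h)
        · exact le_max_of_le_left ((one_le_div (hTq k0)).mpr h)
      exact h1.trans (Finset.le_sup' (f := fun k => max (T p k / T q k) (T q k / T p k)) (Finset.mem_univ k0))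
    · exact Finset.sup'_le _ _ fun k _ => hbound k
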